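/- Assume the feasible set {x ∈ ℝⁿ : ‖Ax − b‖ ≤ δ} is nonempty. Then for any given ρ > 0, the penalty problem min { ⟨e, e − v⟩ + ρ⟨v, |x|⟩ : ‖Ax − b‖ ≤ δ, 0 ≤ v ≤ e } over (x, v) ∈ ℝⁿ × ℝⁿ has a nonempty set of globally optimal solutions, i.e., there exists a feasible pair (x̄, v̄) whose objective value is less than or equal to that of every feasible pair. -/

import Mathlib

open Finset Filter

noncomputable def enorm {m : ℕ} (u : Fin m → ℝ) : ℝ := Real.sqrt (∑ i, u i ^ 2)

lemma enorm_nonneg' {m : ℕ} (u : Fin m → ℝ) : 0 ≤ _root_.enorm u := Real.sqrt_nonneg _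

lemma abs_le_enorm {m : ℕ} (u : Fin m → ℝ) (i : Fin m) : |u i| ≤ _root_.enorm u := by
  rw [← Real.sqrt_sq_eq_abs]
  apply Real.sqrt_le_sqrt
  exact Finset.single_le_sum (f := fun j => u j ^ 2) (fun j _ => sq_nonneg _) (mem_univ i)

lemma continuous_enorm' {m : ℕ} : Continuous (_root_.enorm (m := m)) := by
  unfold _root_.enorm
  exact Real.continuous_sqrt.comp (continuous_finset_sum _ fun i _ => (continuous_apply i).pow 2)

/-- The set `{y : ‖y - b‖ ≤ δ}` is compact. -/
lemma isCompact_K {m : ℕ} (b : Fin m → ℝ) (δ : ℝ) (hδ : 0 ≤ δ) :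
    IsCompact {y : Fin m → ℝ | _root_.enorm (y - b) ≤ δ} := by
  apply IsCompact.of_isClosed_subset (isCompact_closedBall b δ)
  · exact isClosed_le (continuous_enorm'.comp (continuous_id.sub continuous_const)) continuous_const
  · intro y hy
    simp only [Set.mem_setOf_eq] at hy
    rw [Metric.mem_closedBall, dist_pi_le_iff hδ]
    intro i
    calc dist (y i) (b i) = |(y - b) i| := by simp [Real.dist_eq]
    _ ≤ _root_.enorm (y - b) := abs_le_enorm _ i
    _ ≤ δ := hy

/-- projection onto coordinates in S, as a linear map -/
noncomputable def projS {n : ℕ} (S : Finset (Fin n)) : (Fin n → ℝ) →ₗ[ℝ] (Fin n → ℝ) where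
  toFun x i := if i ∈ S then x i else 0
  map_add' x y := by funext i; by_cases h : i ∈ S <;> simp [h]
  map_smul' c x := by funext i; by_cases h : i ∈ S <;> simp [h]

lemma sum_abs_projS {n : ℕ} (S : Finset (Fin n)) (x : Fin n → ℝ) :
    ∑ i, |projS S x i| = ∑ i ∈ S, |x i| := by
  rw [← Finset.sum_filter_add_sum_filter_not univ (· ∈ S) (fun i => |projS S x i|)]
  have h1 : ∀ i ∈ univ.filter (· ∈ S), |projS S x i| = |x i| := by
    intro i hi; simp only [mem_filter] at hi; simp [projS, hi.2]
  have h2 : ∀ i ∈ univ.filter (¬ · ∈ S), |projS S x i| = 0 := by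
    intro i hi; simp only [mem_filter] at hi; simp [projS, hi.2]
  rw [Finset.sum_congr rfl h1, Finset.sum_congr rfl h2, Finset.sum_const_zero, add_zero,
    Finset.filter_mem_eq_inter, univ_inter]

/-- Key attainment lemma. -/
lemma exists_min_subset {m n : ℕ} (A : Matrix (Fin m) (Fin n) ℝ) (K : Set (Fin m → ℝ))
    (hK : IsCompact K) (S : Finset (Fin n)) (x0 : Fin n → ℝ) (hx0 : A.mulVec x0 ∈ K) :
    ∃ xS, A.mulVec xS ∈ K ∧ ∀ x, A.mulVec x ∈ K → ∑ i ∈ S, |xS i| ≤ ∑ i ∈ S, |x i| := by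
  classical
  set B : (Fin n → ℝ) →ₗ[ℝ] (Fin n → ℝ) × (Fin m → ℝ) :=
    (projS S).prod A.mulVecLin with hB
  have hrange : IsClosed ((LinearMap.range B : Submodule ℝ _) : Set ((Fin n → ℝ) × (Fin m → ℝ))) :=
    Submodule.closed_of_finiteDimensional _
  set P : Set (Fin n → ℝ) := {u | ∃ x, A.mulVec x ∈ K ∧ projS S x = u} with hP
  have hPclosed : IsClosed P := by
    apply IsSeqClosed.isClosed
    intro useq u hmem hu
    choose xs hxs hproj using hmem
    obtain ⟨y, hyK, φ, hφ, hy⟩ := hK.tendsto_subseq (x := fun j => A.mulVec (xs j)) hxs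
    have htend : Tendsto (fun k => (useq (φ k), A.mulVec (xs (φ k)))) atTop (nhds (u, y)) :=
      (hu.comp hφ.tendsto_atTop).prodMk_nhds hy
    have hmemB : ∀ k, (useq (φ k), A.mulVec (xs (φ k))) ∈
        ((LinearMap.range B : Submodule ℝ _) : Set _) := by
      intro k
      exact ⟨xs (φ k), by simp [hB, LinearMap.prod_apply, hproj]⟩
    have := hrange.mem_of_tendsto htend (Filter.Eventually.of_forall hmemB)
    obtain ⟨x, hx⟩ := this
    simp only [hB, LinearMap.prod_apply, Prod.mk.injEq, LinearMap.coe_prod] at hx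
    refine ⟨x, ?_, ?_⟩
    · have : A.mulVec x = y := by
        have := congrArg Prod.snd hx; simpa using this
      rw [this]; exact hyK
    · have := congrArg Prod.fst hx; simpa [Pi.single] using this
  have hcont : Continuous (fun u : Fin n → ℝ => ∑ i, |u i|) :=
    continuous_finset_sum _ fun i _ => (continuous_apply i).abs
  set t : ℝ := ∑ i, |projS S x0 i| with ht
  set P' : Set (Fin n → ℝ) := P ∩ {u | ∑ i, |u i| ≤ t} with hP'
  have hu0 : projS S x0 ∈ P' := ⟨⟨x0, hx0, rfl⟩, by simp [ht]⟩
  have htnn : 0 ≤ t := Finset.sum_nonneg fun i _ => abs_nonneg _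
  have hP'cpt : IsCompact P' := by
    apply IsCompact.of_isClosed_subset (isCompact_closedBall (0 : Fin n → ℝ) t)
    · exact hPclosed.inter (isClosed_le hcont continuous_const)
    · intro u hu
      rw [Metric.mem_closedBall, dist_pi_le_iff htnn]
      intro i
      calc dist (u i) 0 = |u i| := by simp [Real.dist_eq]
      _ ≤ ∑ j, |u j| := Finset.single_le_sum (f := fun j => |u j|) (fun j _ => abs_nonneg _) (mem_univ i)
      _ ≤ t := hu.2
  obtain ⟨u, huP', hmin⟩ := hP'cpt.exists_isMinOn ⟨_, hu0⟩ hcont.continuousOn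
  obtain ⟨xS, hxSK, hxSu⟩ := huP'.1
  refine ⟨xS, hxSK, fun x hx => ?_⟩
  have key : ∑ i, |u i| ≤ ∑ i, |projS S x i| := by
    by_cases hc : ∑ i, |projS S x i| ≤ t
    · exact hmin ⟨⟨x, hx, rfl⟩, hc⟩
    · calc ∑ i, |u i| ≤ t := huP'.2
      _ ≤ ∑ i, |projS S x i| := le_of_not_ge hc
  calc ∑ i ∈ S, |xS i| = ∑ i, |projS S xS i| := (sum_abs_projS S xS).symm
  _ = ∑ i, |u i| := by rw [hxSu]
  _ ≤ ∑ i, |projS S x i| := key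
  _ = ∑ i ∈ S, |x i| := sum_abs_projS S x
/-- if the feasible set `{x : ‖Ax − b‖ ≤ δ}` is nonempty, then for any `ρ > 0`
the penalty problem `min { ⟨e, e − v⟩ + ρ⟨v, |x|⟩ : ‖Ax − b‖ ≤ δ, 0 ≤ v ≤ e }` has a
globally optimal solution. -/
theorem penalty_problem_has_global_min {m n : ℕ} (A : Matrix (Fin m) (Fin n) ℝ)
    (b : Fin m → ℝ) (δ : ℝ) (hδ : 0 ≤ δ)
    (hne : ∃ x : Fin n → ℝ, _root_.enorm (A.mulVec x - b) ≤ δ)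
    (ρ : ℝ) (hρ : 0 < ρ) :
    ∃ xb vb : Fin n → ℝ,
      (_root_.enorm (A.mulVec xb - b) ≤ δ ∧ ∀ i, 0 ≤ vb i ∧ vb i ≤ 1) ∧
      ∀ x v : Fin n → ℝ, _root_.enorm (A.mulVec x - b) ≤ δ → (∀ i, 0 ≤ v i ∧ v i ≤ 1) →
        (∑ i, (1 - vb i)) + ρ * ∑ i, vb i * |xb i| ≤
          (∑ i, (1 - v i)) + ρ * ∑ i, v i * |x i| := by
  classical
  obtain ⟨x0, hx0⟩ := hne
  set K : Set (Fin m → ℝ) := {y | _root_.enorm (y - b) ≤ δ} with hKdef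
  have hK : IsCompact K := isCompact_K b δ hδ
  have hmem : ∀ x : Fin n → ℝ, (_root_.enorm (A.mulVec x - b) ≤ δ) ↔ A.mulVec x ∈ K := fun x => Iff.rfl
  have hx0K : A.mulVec x0 ∈ K := hx0
  choose xS hxSK hxSmin using fun S : Finset (Fin n) => exists_min_subset A K hK S x0 hx0K
  set F : Finset (Fin n) → ℝ :=
    fun S => (((univ : Finset (Fin n)) \ S).card : ℝ) + ρ * ∑ i ∈ S, |xS S i| with hF
  obtain ⟨Sb, -, hSb⟩ := Finset.exists_min_image (univ : Finset (Finset (Fin n))) F univ_nonempty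
  refine ⟨xS Sb, fun i => if i ∈ Sb then 1 else 0,
    ⟨hxSK Sb, fun i => by simp only []; split_ifs <;> norm_num⟩, ?_⟩
  intro x v hxK hv
  -- LHS equals F Sb
  have h1 : (∑ i, (1 - (if i ∈ Sb then (1:ℝ) else 0))) = (((univ : Finset (Fin n)) \ Sb).card : ℝ) := by
    rw [Finset.sum_congr rfl (fun i _ => show (1 - (if i ∈ Sb then (1:ℝ) else 0)) =
      (if i ∈ Sb then (0:ℝ) else 1) by split_ifs <;> ring)]
    rw [Finset.sum_ite, Finset.sum_const_zero, Finset.sum_const, zero_add, nsmul_eq_mul, mul_one,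
      Finset.filter_not, Finset.filter_mem_eq_inter, Finset.univ_inter]
  have h2 : (∑ i, (if i ∈ Sb then (1:ℝ) else 0) * |xS Sb i|) = ∑ i ∈ Sb, |xS Sb i| := by
    rw [Finset.sum_congr rfl (fun i _ => show (if i ∈ Sb then (1:ℝ) else 0) * |xS Sb i| =
      (if i ∈ Sb then |xS Sb i| else 0) by split_ifs <;> ring)]
    rw [Finset.sum_ite, Finset.sum_const_zero, add_zero, Finset.filter_mem_eq_inter,
      Finset.univ_inter]
  rw [h1, h2]
  -- RHS lower bound
  set Sx : Finset (Fin n) := univ.filter (fun i => ρ * |x i| ≤ 1) with hSx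
  have key : F Sx ≤ (∑ i, (1 - v i)) + ρ * ∑ i, v i * |x i| := by
    have e1 : (∑ i, (1 - v i)) + ρ * ∑ i, v i * |x i|
        = ∑ i, ((1 - v i) + ρ * (v i * |x i|)) := by
      rw [Finset.sum_add_distrib, Finset.mul_sum]
    have e2 : ∀ i : Fin n, (if ρ * |x i| ≤ 1 then ρ * |x i| else 1)
        ≤ (1 - v i) + ρ * (v i * |x i|) := by
      intro i
      obtain ⟨h0, h1'⟩ := hv i
      have hxa : 0 ≤ |x i| := abs_nonneg _
      split_ifs with hc
      · nlinarith
      · push_neg at hc; nlinarith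
    have e3 : ∑ i, (if ρ * |x i| ≤ 1 then ρ * |x i| else 1)
        = (((univ : Finset (Fin n)) \ Sx).card : ℝ) + ρ * ∑ i ∈ Sx, |x i| := by
      rw [Finset.sum_ite, Finset.sum_const, nsmul_eq_mul, mul_one, Finset.filter_not,
        ← hSx, Finset.mul_sum]
      ring
    have e4 : ρ * ∑ i ∈ Sx, |xS Sx i| ≤ ρ * ∑ i ∈ Sx, |x i| :=
      mul_le_mul_of_nonneg_left (hxSmin Sx x hxK) hρ.le
    calc F Sx = (((univ : Finset (Fin n)) \ Sx).card : ℝ) + ρ * ∑ i ∈ Sx, |xS Sx i| := rfl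
    _ ≤ (((univ : Finset (Fin n)) \ Sx).card : ℝ) + ρ * ∑ i ∈ Sx, |x i| := by linarith
    _ = ∑ i, (if ρ * |x i| ≤ 1 then ρ * |x i| else 1) := e3.symm
    _ ≤ ∑ i, ((1 - v i) + ρ * (v i * |x i|)) := Finset.sum_le_sum (fun i _ => e2 i)
    _ = _ := e1.symm
  calc (((univ : Finset (Fin n)) \ Sb).card : ℝ) + ρ * ∑ i ∈ Sb, |xS Sb i|
      = F Sb := rfl
  _ ≤ F Sx := hSb Sx (mem_univ _)
  _ ≤ _ := key
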